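/- arXiv:1801.09850 — 11 statements merged into one kernel-verified Lean document; each statement's English description precedes it below -/
import Mathlib

section
/- The principal solution x̄ is an optimal solution of the problem: minimize ‖b − A ⊠ x‖₁ subject to A ⊠ x ≤ b, over x ∈ ℝ_max^n. That is, for every x with A ⊠ x ≤ b, ‖b − A ⊠ x̄‖₁ ≤ ‖b − A ⊠ x‖₁. -/
open scoped Classical
open Finset

/-- Max-plus matrix-vector product: `(A ⊠ x) i = max_j (A i j + x j)`. -/
noncomputable def mpMul {m n : ℕ} (A : Fin m → Fin n → EReal) (x : Fin n → EReal) :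
    Fin m → EReal := fun i => ⨆ j, A i j + x j

/-- Principal solution `x̄ j = min_i (b i − A i j)`. -/
noncomputable def principal {m n : ℕ} (A : Fin m → Fin n → EReal) (b : Fin m → ℝ) :
    Fin n → EReal := fun j => ⨅ i, (b i : EReal) - A i j

/-- Every row and every column of `A` has a finite entry. -/
def DoublyAstic {m n : ℕ} (A : Fin m → Fin n → EReal) : Prop :=
  (∀ i, ∃ j, A i j ≠ ⊥) ∧ (∀ j, ∃ i, A i j ≠ ⊥)

/-- All entries lie in ℝ_max = ℝ ∪ {−∞}, i.e. are not +∞. -/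
def RmaxMat {m n : ℕ} (A : Fin m → Fin n → EReal) : Prop := ∀ i j, A i j ≠ ⊤

def RmaxVec {n : ℕ} (x : Fin n → EReal) : Prop := ∀ j, x j ≠ ⊤

/-- Support: indices of finite (non-bottom) components. -/
def supp {n : ℕ} (x : Fin n → EReal) : Set (Fin n) := {j | x j ≠ ⊥}

/-- ℓ₁ residual error `Σ_i (b i − (A ⊠ x) i)` (nonnegative under the lateness constraint). -/
noncomputable def err1 {m n : ℕ} (A : Fin m → Fin n → EReal) (b : Fin m → ℝ)
    (x : Fin n → EReal) : EReal := ∑ i, ((b i : EReal) - mpMul A x i)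


/-- the principal solution is optimal for minimizing the ℓ₁ residual under
the lateness constraint. -/
theorem stmt3 {m n : ℕ} (A : Fin m → Fin n → EReal) (b : Fin m → ℝ)
    (hA : RmaxMat A) (hastic : DoublyAstic A) :
    (∀ i, mpMul A (principal A b) i ≤ (b i : EReal)) ∧
      ∀ x : Fin n → EReal, RmaxVec x → (∀ i, mpMul A x i ≤ (b i : EReal)) →
        err1 A b (principal A b) ≤ err1 A b x := by
  have hfeas : ∀ i, mpMul A (principal A b) i ≤ (b i : EReal) := by
    intro i
    refine iSup_le fun j => ?_
    have h1 : A i j + principal A b j ≤ A i j + ((b i : EReal) - A i j) :=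
      add_le_add le_rfl (iInf_le _ i)
    refine h1.trans ?_
    rcases eq_or_ne (A i j) ⊥ with hb | hb
    · simp [hb]
    · lift A i j to ℝ using ⟨hA i j, hb⟩ with a ha
      rw [show ((b i : EReal) - (a : EReal)) = ((b i - a : ℝ) : EReal) from
        (EReal.coe_sub _ _).symm]
      norm_cast
      linarith
  refine ⟨hfeas, fun x hx hxb => ?_⟩
  have hle : ∀ j, x j ≤ principal A b j := by
    intro j
    refine le_iInf fun i => ?_
    have h : A i j + x j ≤ (b i : EReal) := (le_iSup (fun j => A i j + x j) j).trans (hxb i)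
    rcases eq_or_ne (A i j) ⊥ with hb | hb
    · have ht : ((b i : EReal)) - A i j = ⊤ := by
        rw [hb]; simp [sub_eq_add_neg, EReal.add_top_of_ne_bot]
      rw [ht]; exact le_top
    · lift A i j to ℝ using ⟨hA i j, hb⟩ with a ha
      rcases eq_or_ne (x j) ⊥ with hxb | hxb
      · rw [hxb]; exact bot_le
      · lift x j to ℝ using ⟨hx j, hxb⟩ with t hxt
        rw [show ((b i : EReal) - (a : EReal)) = ((b i - a : ℝ) : EReal) from
          (EReal.coe_sub _ _).symm]
        norm_cast at h ⊢
        linarith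
  have hmono : ∀ i, mpMul A x i ≤ mpMul A (principal A b) i := fun i =>
    iSup_mono fun j => add_le_add le_rfl (hle j)
  exact Finset.sum_le_sum fun i _ => EReal.sub_le_sub le_rfl (hmono i)
end

section
/- Covering theorem: x ∈ ℝ_max^n is a solution of A ⊠ x = b if and only if (a) x ≤ x̄ and (b) ∪_{j ∈ J_x} I_j = {1,…,m}, where J_x = {j : x_j = x̄_j} and I_j = {i : b_i − A_{ij} = x̄_j}. -/
open scoped Classical
open Finset

lemma ereal_add_sub_cancel' (r : ℝ) (c : EReal) : (r : EReal) + (c - (r : EReal)) = c := by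
  induction c using EReal.rec with
  | bot => rw [sub_eq_add_neg, EReal.bot_add, EReal.add_bot]
  | coe c => rw [← EReal.coe_sub, ← EReal.coe_add]; norm_num
  | top =>
      rw [sub_eq_add_neg, ← EReal.coe_neg, EReal.top_add_coe, EReal.coe_add_top]

lemma ereal_sub_ne_bot (r : ℝ) (a : EReal) (h : a ≠ ⊤) : (r : EReal) - a ≠ ⊥ := by
  induction a using EReal.rec with
  | bot => simp
  | coe a => exact fun h => EReal.coe_ne_bot (r - a) (by rw [EReal.coe_sub]; exact h)
  | top => exact absurd rfl h


/-- covering theorem. `x` solves `A ⊠ x = b` iff `x ≤ x̄` and the sets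
`I_j`, `j` in the agreement set, cover `{1,…,m}`. -/
theorem stmt4 {m n : ℕ} (A : Fin m → Fin n → EReal) (b : Fin m → ℝ)
    (hA : RmaxMat A) (hastic : DoublyAstic A)
    (x : Fin n → EReal) (hx : RmaxVec x) :
    (∀ i, mpMul A x i = (b i : EReal)) ↔
      ((∀ j, x j ≤ principal A b j) ∧
        (⋃ j ∈ {j : Fin n | x j = principal A b j},
          {i : Fin m | (b i : EReal) - A i j = principal A b j}) = Set.univ) := by
  have hPle : ∀ j i, principal A b j ≤ (b i : EReal) - A i j := fun j i => iInf_le _ i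
  have hP_ne_top : ∀ j, principal A b j ≠ ⊤ := by
    intro j
    obtain ⟨i, hi⟩ := hastic.2 j
    have h1 : (b i : EReal) - A i j ≠ ⊤ := by
      obtain ⟨r, hr⟩ : ∃ r : ℝ, A i j = (r : EReal) := by
        lift A i j to ℝ using ⟨hA i j, hi⟩ with r
        exact ⟨r, rfl⟩
      rw [hr]
      exact fun h => EReal.coe_ne_top (b i - r) (by rw [EReal.coe_sub]; exact h)
    exact ne_top_of_le_ne_top h1 (hPle j i)
  have hP_ne_bot : ∀ (_ : Fin m) (j : Fin n), principal A b j ≠ ⊥ := by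
    intro i0 j
    have : Nonempty (Fin m) := ⟨i0⟩
    obtain ⟨i, hi⟩ := exists_eq_ciInf_of_finite (f := fun i => (b i : EReal) - A i j)
    rw [principal, ← hi]
    exact ereal_sub_ne_bot _ _ (hA i j)
  -- key inequality: x ≤ principal → A i j + x j ≤ b i
  have hkey : ∀ (hle : ∀ j, x j ≤ principal A b j) (i : Fin m) (j : Fin n),
      A i j + x j ≤ (b i : EReal) := by
    intro hle i j
    by_cases hb : A i j = ⊥
    · simp [hb, EReal.bot_add]
    · have hxj : x j ≤ (b i : EReal) - A i j := (hle j).trans (hPle j i)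
      rw [EReal.le_sub_iff_add_le (Or.inl hb) (Or.inl (hA i j))] at hxj
      rwa [add_comm] at hxj
  constructor
  · intro h
    have ha : ∀ j, x j ≤ principal A b j := by
      intro j
      refine le_iInf fun i => ?_
      have hsup : A i j + x j ≤ (b i : EReal) := by
        rw [← h i]; exact le_iSup (fun j => A i j + x j) j
      by_cases hb : A i j = ⊥
      · rw [hb, EReal.coe_sub_bot]; exact le_top
      · rw [EReal.le_sub_iff_add_le (Or.inl hb) (Or.inl (hA i j))]
        rwa [add_comm]
    refine ⟨ha, ?_⟩
    ext i
    simp only [Set.mem_iUnion, Set.mem_setOf_eq, Set.mem_univ, iff_true]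
    rcases isEmpty_or_nonempty (Fin n) with hn | hn
    · exfalso
      have := h i
      rw [mpMul, iSup_of_empty] at this
      exact (EReal.coe_ne_bot (b i)) this.symm
    · obtain ⟨j, hj⟩ := exists_eq_ciSup_of_finite (f := fun j => A i j + x j)
      have hj' : A i j + x j = (b i : EReal) := by rw [hj]; exact h i
      have hAb : A i j ≠ ⊥ := by
        intro hb; rw [hb, EReal.bot_add] at hj'
        exact (EReal.coe_ne_bot (b i)) hj'.symm
      obtain ⟨r, hr⟩ : ∃ r : ℝ, A i j = (r : EReal) := by
        lift A i j to ℝ using ⟨hA i j, hAb⟩ with r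
        exact ⟨r, rfl⟩
      have hxeq : (b i : EReal) - A i j = x j := by
        rw [hr] at hj' ⊢
        rw [← hj', add_comm, EReal.add_sub_cancel_right]
      have hxP : x j = principal A b j := by
        refine le_antisymm (ha j) ?_
        rw [← hxeq]; exact hPle j i
      exact ⟨j, hxP, by rw [hxeq, hxP]⟩
  · rintro ⟨hle, hcov⟩ i
    apply le_antisymm
    · exact iSup_le (hkey hle i)
    · have hmem : i ∈ ⋃ j ∈ {j : Fin n | x j = principal A b j},
          {i : Fin m | (b i : EReal) - A i j = principal A b j} := by
        rw [hcov]; exact Set.mem_univ i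
      simp only [Set.mem_iUnion, Set.mem_setOf_eq] at hmem
      obtain ⟨j, hxj, hij⟩ := hmem
      have hAb : A i j ≠ ⊥ := by
        intro hb
        rw [hb, EReal.coe_sub_bot] at hij
        exact hP_ne_top j hij.symm
      obtain ⟨r, hr⟩ : ∃ r : ℝ, A i j = (r : EReal) := by
        lift A i j to ℝ using ⟨hA i j, hAb⟩ with r
        exact ⟨r, rfl⟩
      have : A i j + x j = (b i : EReal) := by
        rw [hxj, ← hij, hr, ereal_add_sub_cancel']
      rw [← this]
      exact le_iSup (fun j => A i j + x j) j
end

section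
/- Given a set cover {I_j : j ∈ K}, K ⊆ {1,…,n}, of I = {1,…,m} (with I_j defined from A, b), the vector x(K) with x(K)_j = x̄_j for j ∈ K and x(K)_j = −∞ for j ∉ K is a solution of A ⊠ x = b. -/
open scoped Classical
open Finset

/-- a set cover `{I_j : j ∈ K}` yields a solution `x(K)`. -/
theorem stmt5 {m n : ℕ} (A : Fin m → Fin n → EReal) (b : Fin m → ℝ)
    (hA : RmaxMat A) (hastic : DoublyAstic A)
    (hsol : ∃ x0 : Fin n → EReal, RmaxVec x0 ∧ ∀ i, mpMul A x0 i = (b i : EReal))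
    (K : Finset (Fin n))
    (hcov : ∀ i, ∃ j ∈ K, (b i : EReal) - A i j = principal A b j) :
    ∀ i, mpMul A (fun j => if j ∈ K then principal A b j else ⊥) i = (b i : EReal) := by
  intro i
  have hub : ∀ j, principal A b j ≤ (b i : EReal) - A i j := fun j => iInf_le _ i
  have hle : ∀ j : Fin n, A i j + (if j ∈ K then principal A b j else ⊥) ≤ (b i : EReal) := by
    intro j
    by_cases hj : j ∈ K
    · simp only [hj, if_true]
      by_cases hb : A i j = ⊥
      · simp [hb]
      · obtain ⟨a, ha⟩ : ∃ a : ℝ, A i j = (a : EReal) :=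
          ⟨(A i j).toReal, (EReal.coe_toReal (hA i j) hb).symm⟩
        calc A i j + principal A b j ≤ A i j + ((b i : EReal) - A i j) :=
              add_le_add le_rfl (hub j)
          _ = (b i : EReal) := by
              rw [ha, show ((b i : EReal) - (a : EReal)) = ((b i - a : ℝ) : EReal) by
                norm_cast]
              norm_cast; ring
    · simp [hj]
  refine le_antisymm (iSup_le hle) ?_
  obtain ⟨j, hjK, hj⟩ := hcov i
  have hjne : A i j ≠ ⊥ := by
    intro hb
    obtain ⟨i', hi'⟩ := hastic.2 j
    have h1 : principal A b j ≤ (b i' : EReal) - A i' j := iInf_le _ i'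
    have htop : (b i' : EReal) - A i' j ≠ ⊤ := by
      obtain ⟨a, ha⟩ : ∃ a : ℝ, A i' j = (a : EReal) :=
        ⟨(A i' j).toReal, (EReal.coe_toReal (hA i' j) hi').symm⟩
      rw [ha]
      rw [show ((b i' : EReal) - (a : EReal)) = ((b i' - a : ℝ) : EReal) by norm_cast]
      exact EReal.coe_ne_top _
    rw [← hj, hb] at h1
    rw [EReal.coe_sub_bot] at h1
    exact htop (top_le_iff.mp h1)
  have hkey : A i j + (if j ∈ K then principal A b j else ⊥) = (b i : EReal) := by
    rw [if_pos hjK, ← hj]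
    obtain ⟨a, ha⟩ : ∃ a : ℝ, A i j = (a : EReal) :=
      ⟨(A i j).toReal, (EReal.coe_toReal (hA i j) hjne).symm⟩
    rw [ha]
    rw [show ((b i : EReal) - (a : EReal)) = ((b i - a : ℝ) : EReal) by norm_cast]
    norm_cast; ring
  rw [← hkey]
  exact le_iSup (fun j => A i j + (if j ∈ K then principal A b j else ⊥)) j
end

section
/- Conversely, if {I_j : j ∈ K*} is a minimum set cover of {1,…,m}, then the vector x̂ defined by x̂_j = x̄_j for j ∈ K* and x̂_j = −∞ otherwise is a sparsest solution of A ⊠ x = b, i.e., it minimizes |supp(x)| among all solutions. -/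
open scoped Classical
open Finset

/-- a minimum set cover yields a sparsest solution. -/
theorem stmt7 {m n : ℕ} (A : Fin m → Fin n → EReal) (b : Fin m → ℝ)
    (hA : RmaxMat A) (hastic : DoublyAstic A)
    (hsol : ∃ x0 : Fin n → EReal, RmaxVec x0 ∧ ∀ i, mpMul A x0 i = (b i : EReal))
    (K : Finset (Fin n))
    (hcov : ∀ i, ∃ j ∈ K, (b i : EReal) - A i j = principal A b j)
    (hmin : ∀ K' : Finset (Fin n),
      (∀ i, ∃ j ∈ K', (b i : EReal) - A i j = principal A b j) → K.card ≤ K'.card) :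
    (∀ i, mpMul A (fun j => if j ∈ K then principal A b j else ⊥) i = (b i : EReal)) ∧
      ∀ x : Fin n → EReal, RmaxVec x → (∀ i, mpMul A x i = (b i : EReal)) →
        (supp (fun j => if j ∈ K then principal A b j else ⊥)).ncard ≤ (supp x).ncard := by
  -- principal is never ⊤
  have hpt : ∀ j, principal A b j ≠ ⊤ := by
    intro j
    obtain ⟨i, hi⟩ := hastic.2 j
    have h1 : principal A b j ≤ (b i : EReal) - A i j := iInf_le _ i
    have h2 : (b i : EReal) - A i j ≠ ⊤ := by
      lift A i j to ℝ using ⟨hA i j, hi⟩ with a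
      exact (by norm_cast : ((b i - a : ℝ) : EReal) = (b i : EReal) - a) ▸ EReal.coe_ne_top _
    exact fun h => h2 (top_le_iff.mp (h ▸ h1))
  -- principal satisfies A i j + x̄ j ≤ b i
  have hub : ∀ i j, A i j + principal A b j ≤ (b i : EReal) := by
    intro i j
    have := EReal.add_le_of_le_sub (iInf_le (fun i => (b i : EReal) - A i j) i)
    calc A i j + principal A b j = principal A b j + A i j := add_comm _ _
      _ ≤ (b i : EReal) := this
  -- Part 1
  have part1 : ∀ i, mpMul A (fun j => if j ∈ K then principal A b j else ⊥) i = (b i : EReal) := by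
    intro i
    apply le_antisymm
    · apply iSup_le
      intro j
      by_cases hj : j ∈ K
      · simpa [hj] using hub i j
      · simp [hj, EReal.add_bot]
    · obtain ⟨j, hjK, hj⟩ := hcov i
      have hAij : A i j ≠ ⊥ := by
        intro hb
        rw [hb, EReal.coe_sub_bot] at hj
        exact hpt j hj.symm
      have hsum : A i j + principal A b j = (b i : EReal) := by
        rw [← hj]
        lift A i j to ℝ using ⟨hA i j, hAij⟩ with a
        have : (b i : EReal) - (a : EReal) = ((b i - a : ℝ) : EReal) := by norm_cast
        rw [this]
        norm_cast
        try ring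
      calc (b i : EReal) = A i j + (if j ∈ K then principal A b j else ⊥) := by
            rw [if_pos hjK, hsum]
        _ ≤ _ := le_iSup (fun j => A i j + (if j ∈ K then principal A b j else ⊥)) j
  refine ⟨part1, ?_⟩
  intro x hxT hx
  -- supp x as a finset is a cover
  have hcover : ∀ i, ∃ j ∈ (supp x).toFinset, (b i : EReal) - A i j = principal A b j := by
    intro i
    -- the sup is attained
    have hne : Nonempty (Fin n) := by
      rcases Nat.eq_zero_or_pos n with h | h
      · exfalso
        have := hx i
        subst h
        simp [mpMul, iSup_of_empty] at this
      · exact ⟨⟨0, h⟩⟩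
    obtain ⟨j, hj⟩ := Finite.exists_max (fun j => A i j + x j)
    have hatt : A i j + x j = (b i : EReal) := by
      have : mpMul A x i = A i j + x j := le_antisymm (iSup_le hj) (le_iSup (fun j => A i j + x j) j)
      rw [← this, hx i]
    have hxjb : x j ≠ ⊥ := by
      intro hb
      rw [hb, EReal.add_bot] at hatt
      exact (EReal.bot_ne_coe (b i)) hatt
    have hAij : A i j ≠ ⊥ := by
      intro hb
      rw [hb, EReal.bot_add] at hatt
      exact (EReal.bot_ne_coe (b i)) hatt
    refine ⟨j, Set.mem_toFinset.mpr hxjb, ?_⟩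
    -- x j = b i - A i j and x j ≤ principal, principal ≤ b i - A i j
    have hxeq : x j = (b i : EReal) - A i j := by
      lift A i j to ℝ using ⟨hA i j, hAij⟩ with a
      lift x j to ℝ using ⟨hxT j, hxjb⟩ with xj
      have : (b i : EReal) - (a : EReal) = ((b i - a : ℝ) : EReal) := by norm_cast
      rw [this]
      norm_cast
      norm_cast at hatt
      linarith
    have hxle : x j ≤ principal A b j := by
      apply le_iInf
      intro i'
      have h1 : A i' j + x j ≤ (b i' : EReal) := le_trans (le_iSup (fun j => A i' j + x j) j) (le_of_eq (hx i'))
      rcases eq_or_ne (A i' j) ⊥ with hb | hb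
      · rw [hb, EReal.coe_sub_bot]
        exact le_top
      · rw [EReal.le_sub_iff_add_le (Or.inl hb) (Or.inl (hA i' j)), add_comm]
        exact h1
    have hple : principal A b j ≤ (b i : EReal) - A i j := iInf_le _ i
    exact (le_antisymm hple (hxeq ▸ hxle)).symm
  have hK' := hmin (supp x).toFinset hcover
  have hsub : supp (fun j => if j ∈ K then principal A b j else ⊥) ⊆ ↑K := by
    intro j hj
    by_contra h
    simp only [Finset.mem_coe] at h
    simp [supp, h] at hj
  calc (supp (fun j => if j ∈ K then principal A b j else ⊥)).ncard
      ≤ (↑K : Set (Fin n)).ncard := Set.ncard_le_ncard hsub (K.finite_toSet)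
    _ = K.card := Set.ncard_coe_finset K
    _ ≤ (supp x).toFinset.card := hK'
    _ = (supp x).ncard := (Set.ncard_eq_toFinset_card' _).symm
end

section
/- Fix T ⊆ {1,…,n} and let z ∈ ℝ_max^n be defined by z_j = x̄_j for j ∈ T and z_j = −∞ for j ∉ T. Then z satisfies A ⊠ z ≤ b, and for every x ∈ ℝ_max^n with supp(x) = T and A ⊠ x ≤ b, we have ‖b − A ⊠ x‖₁ ≥ ‖b − A ⊠ z‖₁. -/
open scoped Classical
open Finset

lemma aux_add_sub_le (c : ℝ) (a : EReal) (ha : a ≠ ⊤) :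
    a + ((c : EReal) - a) ≤ (c : EReal) := by
  induction a with
  | bot => simp
  | coe a =>
    rw [show ((c : EReal) - (a : EReal)) = ((c - a : ℝ) : EReal) from rfl, ← EReal.coe_add]
    exact_mod_cast le_of_eq (by ring)
  | top => exact absurd rfl ha

/-- for fixed support `T`, the vector agreeing with the principal solution on `T`
is feasible and has minimal ℓ₁ residual among feasible vectors with support `T`. -/
theorem stmt8 {m n : ℕ} (A : Fin m → Fin n → EReal) (b : Fin m → ℝ)
    (hA : RmaxMat A) (hastic : DoublyAstic A) (T : Finset (Fin n)) :
    (∀ i, mpMul A (fun j => if j ∈ T then principal A b j else ⊥) i ≤ (b i : EReal)) ∧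
      ∀ x : Fin n → EReal, RmaxVec x → supp x = ↑T →
        (∀ i, mpMul A x i ≤ (b i : EReal)) →
        err1 A b (fun j => if j ∈ T then principal A b j else ⊥) ≤ err1 A b x := by
  set z : Fin n → EReal := fun j => if j ∈ T then principal A b j else ⊥ with hz
  have key : ∀ i j, A i j + z j ≤ (b i : EReal) := by
    intro i j
    by_cases hj : j ∈ T
    · have h1 : principal A b j ≤ (b i : EReal) - A i j := iInf_le _ i
      have h2 : A i j + z j ≤ A i j + ((b i : EReal) - A i j) := by
        simp only [hz, hj, if_true]
        exact add_le_add le_rfl h1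
      exact h2.trans (aux_add_sub_le (b i) (A i j) (hA i j))
    · simp [hz, hj]
  have feas : ∀ i, mpMul A z i ≤ (b i : EReal) := fun i => iSup_le (key i)
  refine ⟨feas, fun x hx hsupp hfeas => ?_⟩
  have hxz : ∀ j, x j ≤ z j := by
    intro j
    by_cases hj : j ∈ T
    · simp only [hz, hj, if_true]
      refine le_iInf fun i => ?_
      rw [EReal.le_sub_iff_add_le (Or.inr (EReal.coe_ne_bot _)) (Or.inl (hA i j)),
        add_comm]
      exact (le_iSup (fun j => A i j + x j) j).trans (hfeas i)
    · have : j ∉ supp x := by rw [hsupp]; exact_mod_cast hj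
      simp only [supp, Set.mem_setOf_eq, not_not] at this
      simp [this]
  have hmul : ∀ i, mpMul A x i ≤ mpMul A z i := fun i =>
    iSup_mono fun j => add_le_add le_rfl (hxz j)
  exact Finset.sum_le_sum fun i _ => EReal.sub_le_sub le_rfl (hmul i)
end

section
/- The ℓ₁-error set function E: 2^J → ℝ, E(T) = ‖e(T)‖₁ with e(T) as above, is supermodular: for all C ⊆ B ⊆ J and k ∈ J, E(C ∪ {k}) − E(C) ≤ E(B ∪ {k}) − E(B). -/
open scoped Classical
open Finset

/-- Real error vector for a finite matrix `A`:
`e(T) i = b i − max_{j∈T}(A i j + x̄ j)` for nonempty `T`, `e(∅) = max_j e({j})`. -/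
noncomputable def eVecR {m n : ℕ} (A : Fin m → Fin n → ℝ) (b : Fin m → ℝ)
    (T : Finset (Fin n)) : Fin m → ℝ :=
  fun i => if hT : T.Nonempty then b i - T.sup' hT (fun j => A i j + (⨅ t, (b t - A t j)))
           else ⨆ j, (b i - (A i j + (⨅ t, (b t - A t j))))

/-- ℓ₁-error set function `E(T) = Σ_i e_i(T)`. -/
noncomputable def ER {m n : ℕ} (A : Fin m → Fin n → ℝ) (b : Fin m → ℝ)
    (T : Finset (Fin n)) : ℝ := ∑ i, eVecR A b T i

/-- the ℓ₁-error set function is supermodular. -/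
theorem stmt11 {m n : ℕ} (hm : 0 < m) (hn : 0 < n)
    (A : Fin m → Fin n → ℝ) (b : Fin m → ℝ) :
    ∀ C B : Finset (Fin n), C ⊆ B → ∀ k : Fin n,
      ER A b (insert k C) - ER A b C ≤ ER A b (insert k B) - ER A b B := by
  intro C B hCB k
  haveI : Nonempty (Fin n) := ⟨⟨0, hn⟩⟩
  have key : ∀ i, eVecR A b (insert k C) i - eVecR A b C i ≤
      eVecR A b (insert k B) i - eVecR A b B i := by
    intro i
    simp only [eVecR]
    set f : Fin n → ℝ := fun j => A i j + (⨅ t, (b t - A t j)) with hf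
    by_cases hC : C.Nonempty
    · have hB : B.Nonempty := hC.mono hCB
      have hkC : (insert k C).Nonempty := Finset.insert_nonempty _ _
      have hkB : (insert k B).Nonempty := Finset.insert_nonempty _ _
      rw [dif_pos hC, dif_pos hB, dif_pos hkC, dif_pos hkB]
      have e1 : (insert k C).sup' hkC f = f k ⊔ C.sup' hC f := Finset.sup'_insert hC f
      have e2 : (insert k B).sup' hkB f = f k ⊔ B.sup' hB f := Finset.sup'_insert hB f
      have hmono : C.sup' hC f ≤ B.sup' hB f := Finset.sup'_mono f hCB hC
      rw [e1, e2]
      rcases le_total (f k) (C.sup' hC f) with h1 | h1 <;>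
        rcases le_total (f k) (B.sup' hB f) with h2 | h2
      · rw [sup_eq_right.mpr h1, sup_eq_right.mpr h2]; linarith
      · rw [sup_eq_right.mpr h1, sup_eq_left.mpr h2]; linarith
      · rw [sup_eq_left.mpr h1, sup_eq_right.mpr h2]; linarith
      · rw [sup_eq_left.mpr h1, sup_eq_left.mpr h2]; linarith
    · have hCe : C = ∅ := Finset.not_nonempty_iff_eq_empty.mp hC
      subst hCe
      have hbdd : BddAbove (Set.range fun j => b i - f j) := (Set.finite_range _).bddAbove
      have hkC : (insert k (∅ : Finset (Fin n))).Nonempty := Finset.insert_nonempty _ _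
      rw [dif_pos hkC, dif_neg hC]
      have hEq : (⨆ j, b i - (A i j + ⨅ t, (b t - A t j))) = ⨆ j, (b i - f j) := rfl
      rw [hEq]
      have hS1 : b i - f k ≤ ⨆ j, (b i - f j) := le_ciSup hbdd k
      have hsupk : (insert k (∅ : Finset (Fin n))).sup' hkC f = f k := by simp
      rw [hsupk]
      by_cases hB : B.Nonempty
      · have hkB : (insert k B).Nonempty := Finset.insert_nonempty _ _
        rw [dif_pos hB, dif_pos hkB]
        obtain ⟨j0, hj0⟩ := id hB
        have hS2 : b i - f j0 ≤ ⨆ j, (b i - f j) := le_ciSup hbdd j0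
        have hj0B : f j0 ≤ B.sup' hB f := Finset.le_sup' f hj0
        have e2 : (insert k B).sup' hkB f = f k ⊔ B.sup' hB f := Finset.sup'_insert hB f
        rw [e2]
        rcases le_total (f k) (B.sup' hB f) with h2 | h2
        · rw [sup_eq_right.mpr h2]; linarith
        · rw [sup_eq_left.mpr h2]; linarith
      · have hBe : B = ∅ := Finset.not_nonempty_iff_eq_empty.mp hB
        subst hBe
        rw [dif_pos hkC, dif_neg hC, hsupk, hEq]
  have hsum : ∀ T : Finset (Fin n), ER A b T = ∑ i, eVecR A b T i := fun T => rfl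
  simp only [hsum, ← Finset.sum_sub_distrib]
  exact Finset.sum_le_sum (fun i _ => key i)
end

section
/- If f : 2^J → ℝ is supermodular, then the truncated function f̄(T) = max(f(T), ε) is supermodular for any constant ε ∈ ℝ, provided f is also decreasing. -/
open scoped Classical
open Finset

/-- truncation `max(f(·), ε)` of a decreasing supermodular function is
supermodular. -/
theorem stmt13 {n : ℕ} (f : Finset (Fin n) → ℝ) (ε : ℝ)
    (hsup : ∀ C B : Finset (Fin n), C ⊆ B → ∀ k : Fin n,
      f (insert k C) - f C ≤ f (insert k B) - f B)
    (hdec : ∀ C B : Finset (Fin n), C ⊆ B → f B ≤ f C) :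
    ∀ C B : Finset (Fin n), C ⊆ B → ∀ k : Fin n,
      max (f (insert k C)) ε - max (f C) ε ≤ max (f (insert k B)) ε - max (f B) ε := by
  intro C B hCB k
  have h1 := hsup C B hCB k
  have h2 := hdec C (insert k C) (Finset.subset_insert k C)
  have h3 := hdec B (insert k B) (Finset.subset_insert k B)
  have h4 := hdec C B hCB
  have h5 := hdec (insert k C) (insert k B) (Finset.insert_subset_insert k hCB)
  simp only [max_def]
  split_ifs <;> linarith
end

section
/- Let M > ε ≥ 0 and define Â(M) by Â_{ij} = A_{ij} if A_{ij} ≠ −∞, and Â_{ij} = −M + b_i − x̄_j if A_{ij} = −∞. Then the principal solution computed from (Â(M), b) equals the principal solution x̄ computed from (A, b); consequently A ⊠ x ≤ b iff Â(M) ⊠ x ≤ b. -/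
open scoped Classical
open Finset

/-- The big-M modification of `A`: infinite entries replaced by `−M + b i − x̄ j`. -/
noncomputable def bigM {m n : ℕ} (A : Fin m → Fin n → EReal) (b : Fin m → ℝ) (M : ℝ) :
    Fin m → Fin n → EReal :=
  fun i j => if A i j = ⊥ then (b i : EReal) - (M : EReal) - principal A b j else A i j

/-- Residuation: the lateness constraint is equivalent to domination by the principal
solution. -/
lemma residuation {m n : ℕ} (A : Fin m → Fin n → EReal) (b : Fin m → ℝ)
    (x : Fin n → EReal) :
    (∀ i, mpMul A x i ≤ (b i : EReal)) ↔ ∀ j, x j ≤ principal A b j := by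
  simp only [mpMul, principal, iSup_le_iff, le_iInf_iff]
  constructor
  · intro h j i
    rw [EReal.le_sub_iff_add_le (Or.inr (EReal.coe_ne_bot _)) (Or.inr (EReal.coe_ne_top _)),
      add_comm]
    exact h i j
  · intro h i j
    rw [add_comm, ← EReal.le_sub_iff_add_le (Or.inr (EReal.coe_ne_bot _))
      (Or.inr (EReal.coe_ne_top _))]
    exact h j i

lemma principal_real {m n : ℕ} (A : Fin m → Fin n → EReal) (b : Fin m → ℝ)
    (hA : RmaxMat A) (hastic : DoublyAstic A) (j : Fin n) :
    principal A b j ≠ ⊥ ∧ principal A b j ≠ ⊤ := by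
  obtain ⟨i₀, hi₀⟩ := hastic.2 j
  constructor
  · have hterm : ∀ i, (b i : EReal) - A i j ≠ ⊥ := by
      intro i
      rw [sub_eq_add_neg]
      simp [EReal.add_eq_bot_iff, EReal.neg_eq_bot_iff, hA i j]
    haveI : Nonempty (Fin m) := ⟨i₀⟩
    obtain ⟨i₁, hmin⟩ := Finite.exists_min (fun i => (b i : EReal) - A i j)
    have : principal A b j = (b i₁ : EReal) - A i₁ j :=
      le_antisymm (iInf_le _ i₁) (le_iInf hmin)
    rw [this]
    exact hterm i₁
  · obtain ⟨a, ha⟩ : ∃ a : ℝ, A i₀ j = (a : EReal) := by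
      lift A i₀ j to ℝ using ⟨hA i₀ j, hi₀⟩ with a
      exact ⟨a, rfl⟩
    have h1 : principal A b j ≤ ((b i₀ - a : ℝ) : EReal) := by
      have := iInf_le (fun i => (b i : EReal) - A i j) i₀
      rwa [ha, ← EReal.coe_sub] at this
    exact ne_top_of_le_ne_top (EReal.coe_ne_top _) h1

/-- the big-M matrix has the same principal solution as `A`; hence the
lateness constraints agree. -/
theorem stmt14 {m n : ℕ} (A : Fin m → Fin n → EReal) (b : Fin m → ℝ) (ε M : ℝ)
    (hε : 0 ≤ ε) (hM : ε < M) (hA : RmaxMat A) (hastic : DoublyAstic A) :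
    principal (bigM A b M) b = principal A b ∧
      ∀ x : Fin n → EReal, RmaxVec x →
        ((∀ i, mpMul A x i ≤ (b i : EReal)) ↔
          (∀ i, mpMul (bigM A b M) x i ≤ (b i : EReal))) := by
  have hMpos : (0 : ℝ) < M := lt_of_le_of_lt hε hM
  have hprin : principal (bigM A b M) b = principal A b := by
    funext j
    obtain ⟨hbot, htop⟩ := principal_real A b hA hastic j
    obtain ⟨p, hp⟩ : ∃ p : ℝ, principal A b j = (p : EReal) := by
      lift principal A b j to ℝ using ⟨htop, hbot⟩ with p
      exact ⟨p, rfl⟩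
    apply le_antisymm
    · -- each bigM term ≤ corresponding A term
      refine le_iInf fun i => (iInf_le _ i).trans ?_
      unfold bigM
      split_ifs with h
      · simp [h, EReal.sub_bot]
      · exact le_rfl
    · -- each bigM term ≥ principal A b j
      refine le_iInf fun i => ?_
      unfold bigM
      split_ifs with h
      · -- term is b i - (b i - M - p) = M + p ≥ p
        rw [hp]
        have : (b i : EReal) - ((b i : EReal) - (M : EReal) - (p : EReal)) =
            ((b i - (b i - M - p) : ℝ) : EReal) := by
          push_cast
          rfl
        rw [this]
        have : (p : ℝ) ≤ b i - (b i - M - p) := by linarith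
        exact_mod_cast this
      · exact iInf_le _ i
  refine ⟨hprin, fun x _ => ?_⟩
  rw [residuation, residuation, hprin]
end

section
/- Sparse recovery: let z ∈ ℝ_max^n with (A, A ⊠ z) doubly ℝ-astic and b = A ⊠ z ∈ ℝ^m. Suppose for every j ∈ supp(z) there exists a row i = i(j) such that (a) A_{ij} + z_j > A_{ik} + z_k for all k ∈ supp(z), k ≠ j, and (b) for all l ∉ supp(z) there exists s with A_{sl} > A_{il} + b_s − b_i. Then every solution x of A ⊠ x = b satisfies x_j = z_j for all j ∈ supp(z), and the sparsest solution x* equals z. -/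
open scoped Classical
open Finset

/-- The finite sup over `Fin n` in `EReal` is attained whenever it is a real number. -/
lemma aux_attain {n : ℕ} (f : Fin n → EReal) {c : ℝ} (h : (⨆ j, f j) = (c : EReal)) :
    ∃ k, f k = (c : EReal) := by
  rcases Nat.eq_zero_or_pos n with h0 | h0
  · exfalso; subst h0
    rw [iSup_of_empty] at h
    exact (EReal.bot_ne_coe c) h
  · have : Nonempty (Fin n) := ⟨⟨0, h0⟩⟩
    obtain ⟨k, hk⟩ := Finite.exists_max f
    have h1 := le_iSup f k
    have h2 := iSup_le hk
    rw [h] at h1 h2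
    exact ⟨k, le_antisymm h1 h2⟩

/-- sparse recovery. Under conditions (a) and (b), every solution agrees
with `z` on its support, and the sparsest solution equals `z`. -/
theorem stmt16 {m n : ℕ} (A : Fin m → Fin n → EReal) (z : Fin n → EReal) (b : Fin m → ℝ)
    (hA : RmaxMat A) (hz : RmaxVec z) (hastic : DoublyAstic A)
    (hb : ∀ i, mpMul A z i = (b i : EReal))
    (hcond : ∀ j ∈ supp z, ∃ i : Fin m,
      (∀ k ∈ supp z, k ≠ j → A i k + z k < A i j + z j) ∧
      (∀ l, l ∉ supp z → ∃ s : Fin m, A i l + ((b s - b i : ℝ) : EReal) < A s l)) :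
    (∀ x : Fin n → EReal, RmaxVec x → (∀ i, mpMul A x i = (b i : EReal)) →
      ∀ j ∈ supp z, x j = z j) ∧
    (∀ x : Fin n → EReal, RmaxVec x → (∀ i, mpMul A x i = (b i : EReal)) →
      (∀ y : Fin n → EReal, RmaxVec y → (∀ i, mpMul A y i = (b i : EReal)) →
        (supp x).ncard ≤ (supp y).ncard) → x = z) := by
  -- For each j in supp z, a row i satisfying condition (a) realizes b i at column j.
  have key : ∀ j ∈ supp z, ∀ i : Fin m,
      (∀ k ∈ supp z, k ≠ j → A i k + z k < A i j + z j) →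
      A i j + z j = (b i : EReal) := by
    intro j hj i hi
    obtain ⟨k, hk⟩ := aux_attain (fun k => A i k + z k) (hb i)
    by_cases hkj : k = j
    · subst hkj; exact hk
    · exfalso
      by_cases hks : k ∈ supp z
      · have h1 := hi k hks hkj
        have h2 : A i j + z j ≤ (b i : EReal) := by
          exact le_of_le_of_eq (le_iSup (fun l => A i l + z l) j) (hb i)
        rw [hk] at h1
        exact absurd (h1.trans_le h2) (lt_irrefl _)
      · have hzk : z k = ⊥ := by simpa [supp] using hks
        simp only [hzk, EReal.add_bot] at hk
        exact (EReal.bot_ne_coe _) hk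
  -- Every solution agrees with z on supp z.
  have agree : ∀ x : Fin n → EReal, RmaxVec x → (∀ i, mpMul A x i = (b i : EReal)) →
      ∀ j ∈ supp z, x j = z j := by
    intro x hx hxsol
    have upper : ∀ k ∈ supp z, x k ≤ z k := by
      intro k hk
      obtain ⟨i, hi1, _⟩ := hcond k hk
      have hbi : A i k + z k = (b i : EReal) := key k hk i hi1
      have h1 : A i k + x k ≤ (b i : EReal) := by
        exact le_of_le_of_eq (le_iSup (fun l => A i l + x l) k) (hxsol i)
      have hAik : A i k ≠ ⊥ := by
        intro h; rw [h, EReal.bot_add] at hbi; exact (EReal.bot_ne_coe _) hbi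
      obtain ⟨a, ha⟩ : ∃ a : ℝ, A i k = (a : EReal) :=
        ⟨(A i k).toReal, (EReal.coe_toReal (hA i k) hAik).symm⟩
      rw [ha] at hbi h1
      rw [← hbi] at h1
      exact (EReal.addLECancellable_coe a) h1
    intro j hj
    obtain ⟨i, hi1, hi2⟩ := hcond j hj
    have hbi : A i j + z j = (b i : EReal) := key j hj i hi1
    have hAij : A i j ≠ ⊥ := by
      intro h; rw [h, EReal.bot_add] at hbi; exact (EReal.bot_ne_coe _) hbi
    obtain ⟨a, ha⟩ : ∃ a : ℝ, A i j = (a : EReal) :=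
      ⟨(A i j).toReal, (EReal.coe_toReal (hA i j) hAij).symm⟩
    have hstrict : ∀ k, k ≠ j → A i k + x k < (b i : EReal) := by
      intro k hkj
      by_cases hks : k ∈ supp z
      · have h1 : A i k + x k ≤ A i k + z k := add_le_add le_rfl (upper k hks)
        exact h1.trans_lt (hbi ▸ hi1 k hks hkj)
      · obtain ⟨s, hs⟩ := hi2 k hks
        by_cases hxk : x k = ⊥
        · rw [hxk, EReal.add_bot]; exact EReal.bot_lt_coe _
        by_cases hAk : A i k = ⊥
        · rw [hAk, EReal.bot_add]; exact EReal.bot_lt_coe _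
        obtain ⟨a', ha'⟩ : ∃ a' : ℝ, A i k = (a' : EReal) :=
          ⟨(A i k).toReal, (EReal.coe_toReal (hA i k) hAk).symm⟩
        obtain ⟨t, ht⟩ : ∃ t : ℝ, x k = (t : EReal) :=
          ⟨(x k).toReal, (EReal.coe_toReal (hx k) hxk).symm⟩
        have hAsk : A s k ≠ ⊥ := by
          intro h; rw [h] at hs; exact (not_lt_bot hs)
        obtain ⟨c, hc⟩ : ∃ c : ℝ, A s k = (c : EReal) :=
          ⟨(A s k).toReal, (EReal.coe_toReal (hA s k) hAsk).symm⟩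
        have hsk_le : A s k + x k ≤ (b s : EReal) := by
          exact le_of_le_of_eq (le_iSup (fun l => A s l + x l) k) (hxsol s)
        rw [ha', hc, ← EReal.coe_add] at hs
        rw [hc, ht, ← EReal.coe_add] at hsk_le
        rw [ha', ht, ← EReal.coe_add]
        rw [EReal.coe_lt_coe_iff] at hs
        rw [EReal.coe_le_coe_iff] at hsk_le
        rw [EReal.coe_lt_coe_iff]
        linarith
    obtain ⟨k, hk⟩ := aux_attain (fun k => A i k + x k) (hxsol i)
    have hkj : k = j := by
      by_contra hne
      have h := hstrict k hne
      rw [hk] at h; exact lt_irrefl _ h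
    subst hkj
    rw [ha] at hk hbi
    have hle1 : (a : EReal) + x k ≤ (a : EReal) + z k := le_of_eq (hk.trans hbi.symm)
    have hle2 : (a : EReal) + z k ≤ (a : EReal) + x k := le_of_eq (hbi.trans hk.symm)
    exact le_antisymm ((EReal.addLECancellable_coe a) hle1)
      ((EReal.addLECancellable_coe a) hle2)
  refine ⟨agree, ?_⟩
  intro x hx hxsol hmin
  have hsub : supp z ⊆ supp x := by
    intro j hj
    have hxz := agree x hx hxsol j hj
    show x j ≠ ⊥
    rw [hxz]; exact hj
  have hle := hmin z hz hb
  have heq : supp z = supp x := Set.eq_of_subset_of_ncard_le hsub hle (Set.toFinite _)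
  funext j
  by_cases hj : j ∈ supp z
  · exact agree x hx hxsol j hj
  · have hz' : z j = ⊥ := by simpa [supp] using hj
    have hx' : x j = ⊥ := by
      have hnx : j ∉ supp x := heq ▸ hj
      simpa [supp] using hnx
    rw [hz', hx']
end

section
/- Reduction from set cover: given nonempty subsets S_j ⊆ {1,…,m}, j ∈ {1,…,n}, with ∪_j S_j = {1,…,m}, define A_{ij} = 1 if i ∈ S_j and 0 otherwise, and b_i = 1 for all i. Then the principal solution of A ⊠ x = b is x̄ = (1,…,1), and the attainment sets satisfy I_j = S_j for all j; hence sparsest solutions of A ⊠ x = b correspond exactly to minimum set covers by the S_j. -/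
open scoped Classical
open Finset

/-- Max-plus indicator matrix of a set system: the max-plus "one" (0) on `S j`, and the
max-plus "zero" (−∞) otherwise. -/
noncomputable def coverMat {m n : ℕ} (S : Fin n → Finset (Fin m)) : Fin m → Fin n → EReal :=
  fun i j => if i ∈ S j then (0 : EReal) else ⊥


lemma cm_term {m n : ℕ} (S : Fin n → Finset (Fin m)) (K : Finset (Fin n)) (i : Fin m)
    (j : Fin n) :
    coverMat S i j + (if j ∈ K then (1:EReal) else ⊥)
      = if j ∈ K ∧ i ∈ S j then (1:EReal) else ⊥ := by
  unfold coverMat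
  by_cases h1 : j ∈ K <;> by_cases h2 : i ∈ S j <;> simp [h1, h2]

lemma mp_ind_eq_one {m n : ℕ} (S : Fin n → Finset (Fin m)) (K : Finset (Fin n)) (i : Fin m)
    (h : ∃ j ∈ K, i ∈ S j) :
    mpMul (coverMat S) (fun j => if j ∈ K then (1:EReal) else ⊥) i = ((1:ℝ):EReal) := by
  obtain ⟨j0, hj0, hi0⟩ := h
  rw [EReal.coe_one]
  unfold mpMul
  apply le_antisymm
  · apply iSup_le; intro j
    rw [cm_term]; split <;> simp
  · refine le_trans ?_ (le_iSup _ j0)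
    rw [cm_term]; simp [hj0, hi0]

lemma cover_of_sol {m n : ℕ} (S : Fin n → Finset (Fin m)) (x : Fin n → EReal) (i : Fin m)
    (h : mpMul (coverMat S) x i = ((1:ℝ):EReal)) : ∃ j, x j ≠ ⊥ ∧ i ∈ S j := by
  by_contra hc
  push_neg at hc
  have hall : ∀ j, coverMat S i j + x j = ⊥ := by
    intro j
    by_cases hmem : i ∈ S j
    · have hx : x j = ⊥ := by
        by_contra hx; exact (hc j hx) hmem
      simp [hx]
    · simp [coverMat, hmem]
  have hbot : mpMul (coverMat S) x i = ⊥ := by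
    unfold mpMul; simp [hall]
  rw [h] at hbot
  exact EReal.coe_ne_bot 1 hbot

/-- reduction from minimum set cover: `x̄ = (1,…,1)`, `I_j = S_j`, and
sparsest solutions correspond exactly to minimum set covers. -/
theorem stmt18 {m n : ℕ} (S : Fin n → Finset (Fin m)) (hS : ∀ j, (S j).Nonempty)
    (hcov : ∀ i, ∃ j, i ∈ S j) :
    (∀ j, principal (coverMat S) (fun _ => (1 : ℝ)) j = (1 : EReal)) ∧
    (∀ j, {i : Fin m |
        ((1 : ℝ) : EReal) - coverMat S i j = principal (coverMat S) (fun _ => (1 : ℝ)) j}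
      = ↑(S j)) ∧
    (∀ K : Finset (Fin n),
      ((∀ i, ∃ j ∈ K, i ∈ S j) ∧
        ∀ K' : Finset (Fin n), (∀ i, ∃ j ∈ K', i ∈ S j) → K.card ≤ K'.card) ↔
      ((∀ i, mpMul (coverMat S) (fun j => if j ∈ K then (1 : EReal) else ⊥) i
          = ((1 : ℝ) : EReal)) ∧
        ∀ x : Fin n → EReal, RmaxVec x →
          (∀ i, mpMul (coverMat S) x i = ((1 : ℝ) : EReal)) →
          K.card ≤ (supp x).ncard)) := by
  have h1 : ∀ j, principal (coverMat S) (fun _ => (1 : ℝ)) j = (1 : EReal) := by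
    intro j
    unfold principal coverMat
    apply le_antisymm
    · obtain ⟨i0, hi0⟩ := hS j
      refine le_trans (iInf_le _ i0) ?_
      simp [hi0]
    · apply le_iInf; intro i
      by_cases h : i ∈ S j
      · simp [h]
      · simp only [h, if_false]
        rw [EReal.sub_bot (EReal.coe_ne_bot 1)]
        exact le_top
  refine ⟨h1, ?_, ?_⟩
  · intro j
    ext i
    simp only [Set.mem_setOf_eq, h1 j, Finset.coe_sort_coe, Finset.mem_coe]
    constructor
    · intro h
      by_contra hm
      rw [show coverMat S i j = ⊥ from by simp [coverMat, hm],
        EReal.sub_bot (EReal.coe_ne_bot 1),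
        show (1:EReal) = ((1:ℝ):EReal) from EReal.coe_one.symm] at h
      exact (EReal.coe_ne_top 1) h.symm
    · intro hm
      rw [show coverMat S i j = 0 from by simp [coverMat, hm]]
      simp
  · intro K
    constructor
    · rintro ⟨hKcov, hKmin⟩
      refine ⟨fun i => mp_ind_eq_one S K i (hKcov i), ?_⟩
      intro x hx hsol
      set K2 := Finset.univ.filter (fun j => x j ≠ ⊥) with hK2
      have hsupp : supp x = ↑K2 := by ext j; simp [supp, hK2]
      have hle : K.card ≤ K2.card := by
        apply hKmin
        intro i
        obtain ⟨j, hjx, hjS⟩ := cover_of_sol S x i (hsol i)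
        exact ⟨j, by simp [hK2, hjx], hjS⟩
      rwa [hsupp, Set.ncard_coe_finset]
    · rintro ⟨hsol, hmin⟩
      constructor
      · intro i
        obtain ⟨j, hjx, hjS⟩ := cover_of_sol S _ i (hsol i)
        refine ⟨j, ?_, hjS⟩
        by_contra hj; simp [hj] at hjx
      · intro K' hK'
        have hx' : ∀ i, mpMul (coverMat S) (fun j => if j ∈ K' then (1:EReal) else ⊥) i
            = ((1:ℝ):EReal) := fun i => mp_ind_eq_one S K' i (hK' i)
        have hrv : RmaxVec (fun j => if j ∈ K' then (1:EReal) else ⊥) := by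
          intro j
          by_cases h : j ∈ K'
          · simp only [h, if_true]
            rw [show (1:EReal) = ((1:ℝ):EReal) from EReal.coe_one.symm]
            exact EReal.coe_ne_top 1
          · simp [h]
        have hh := hmin _ hrv hx'
        have hseq : supp (fun j => if j ∈ K' then (1:EReal) else ⊥) = ↑K' := by
          ext j
          simp only [supp, Set.mem_setOf_eq, Finset.mem_coe]
          by_cases h : j ∈ K'
          · simp only [h, if_true, iff_true]
            rw [show (1:EReal) = ((1:ℝ):EReal) from EReal.coe_one.symm]
            exact EReal.coe_ne_bot 1
          · simp [h]
        rwa [hseq, Set.ncard_coe_finset] at hh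
end

section
/- If x ∈ ℝ_max^n is any solution of A ⊠ x = b and x̂ is defined by x̂_j = x_j for j ∈ J_x (the agreement set with the principal solution) and x̂_j = −∞ otherwise, then x̂ is also a solution of A ⊠ x = b and supp(x̂) = J_x ⊆ supp(x). -/
open scoped Classical
open Finset

/-- restricting a solution to its agreement set yields a (sparser) solution. -/
theorem stmt19 {m n : ℕ} (A : Fin m → Fin n → EReal) (b : Fin m → ℝ)
    (hA : RmaxMat A) (hastic : DoublyAstic A)
    (x : Fin n → EReal) (hx : RmaxVec x)
    (hsol : ∀ i, mpMul A x i = (b i : EReal)) :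
    (∀ i, mpMul A (fun j => if x j = principal A b j then x j else ⊥) i = (b i : EReal)) ∧
    supp (fun j => if x j = principal A b j then x j else ⊥)
      = {j : Fin n | x j = principal A b j} ∧
    {j : Fin n | x j = principal A b j} ⊆ supp x := by
  -- upper bound: every term is ≤ b i
  have hub : ∀ i j, A i j + x j ≤ (b i : EReal) := by
    intro i j
    rw [← hsol i]
    exact le_iSup (fun j => A i j + x j) j
  -- x ≤ principal
  have hle : ∀ j, x j ≤ principal A b j := by
    intro j
    refine le_iInf fun i => ?_
    by_cases hbot : A i j = ⊥
    · simp [hbot, EReal.sub_bot (EReal.coe_ne_bot (b i))]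
    · rw [EReal.le_sub_iff_add_le (Or.inl hbot) (Or.inl (hA i j))]
      rw [add_comm]; exact hub i j
  -- principal is never ⊥
  have hpne : ∀ j, principal A b j ≠ ⊥ := by
    intro j hbotp
    rcases isEmpty_or_nonempty (Fin m) with hm | hm
    · rw [principal, iInf_of_empty] at hbotp
      exact top_ne_bot hbotp
    · obtain ⟨i, hi⟩ := exists_eq_ciInf_of_finite (f := fun i => (b i : EReal) - A i j)
      rw [principal] at hbotp
      rw [hbotp] at hi
      rw [sub_eq_add_neg, EReal.add_eq_bot_iff] at hi
      rcases hi with h | h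
      · exact EReal.coe_ne_bot _ h
      · exact hA i j (EReal.neg_eq_bot_iff.mp h)
  have hJsub : {j : Fin n | x j = principal A b j} ⊆ supp x := by
    intro j hj
    simp only [Set.mem_setOf_eq] at hj
    simpa [supp, hj] using hpne j
  refine ⟨?_, ?_, hJsub⟩
  · intro i
    -- n must be positive since mpMul A x i = b i is finite... find attained j
    have hne : Nonempty (Fin n) := by
      by_contra h
      haveI : IsEmpty (Fin n) := not_nonempty_iff.mp h
      have h2 : mpMul A x i = ⊥ := by
        rw [mpMul]; exact iSup_of_empty _
      exact EReal.coe_ne_bot (b i) ((hsol i).symm.trans h2)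
    obtain ⟨j, hj⟩ := exists_eq_ciSup_of_finite (f := fun j => A i j + x j)
    replace hj : A i j + x j = (b i : EReal) := hj.trans (hsol i)
    -- show A i j and x j are not ⊥
    have hAne : A i j ≠ ⊥ := by
      intro h; rw [h, EReal.bot_add] at hj; exact EReal.coe_ne_bot (b i) hj.symm
    have hxne : x j ≠ ⊥ := by
      intro h; rw [h, EReal.add_bot] at hj; exact EReal.coe_ne_bot (b i) hj.symm
    -- x j = principal j
    have hkey : x j = principal A b j := by
      refine le_antisymm (hle j) ?_
      refine le_trans (iInf_le _ i) ?_
      rw [EReal.sub_le_iff_le_add (Or.inl hAne) (Or.inl (hA i j))]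
      rw [add_comm, hj]
    apply le_antisymm
    · refine iSup_le fun j' => ?_
      by_cases h : x j' = principal A b j'
      · simp only [if_pos h]
        exact hub i j'
      · simp [if_neg h]
    · rw [← hj]
      have : A i j + (if x j = principal A b j then x j else ⊥) = A i j + x j := by
        rw [if_pos hkey]
      rw [← this]
      exact le_iSup (fun j' => A i j' + (if x j' = principal A b j' then x j' else ⊥)) j
  · ext j
    simp only [supp, Set.mem_setOf_eq]
    constructor
    · intro h
      by_contra hc
      exact h (if_neg hc)
    · intro h
      rw [if_pos h, h]
      exact hpne j
end
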